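/- Let H be a finite-dimensional complex inner product space, let P̄_0,…,P̄_n be a CSOP on H, let U_0,…,U_t be unitary operators on H, let Ψ ∈ H with ‖Ψ‖ = 1, and let Q be an orthogonal projection on H. Define π : {0,1}^n → ℝ by π(x) = ‖ Q · Σ_{k ∈ {0,…,n}^{t+1}} (−1)^{s_x(k)} Ψ(k) ‖², where s_x(k) = Σ_{i=0}^t x_{k_i} and x_0 := 0. Assume some Ψ(k) is nonzero and let μ = min{ ‖Ψ(k)‖² : k ∈ {0,…,n}^{t+1}, Ψ(k) ≠ 0 }. Then the Fourier 1-norm of π satisfies L(π) ≤ 1/μ. -/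

import Mathlib

noncomputable section

/-- `Utilde U j = U j ∘ U (j-1) ∘ ⋯ ∘ U 0`. -/
def Utilde {H : Type*} [NormedAddCommGroup H] [InnerProductSpace ℂ H]
    (U : ℕ → H →L[ℂ] H) : ℕ → H →L[ℂ] H
  | 0 => U 0
  | j + 1 => U (j + 1) ∘L Utilde U j

/-- `Ptilde U P i j = (Utilde U j)† ∘ P i ∘ Utilde U j`. -/
def Ptilde {H : Type*} [NormedAddCommGroup H] [InnerProductSpace ℂ H]
    [FiniteDimensional ℂ H] (U P : ℕ → H →L[ℂ] H) (i j : ℕ) : H →L[ℂ] H :=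
  ContinuousLinearMap.adjoint (Utilde U j) ∘L (P i ∘L Utilde U j)

/-- `PsiVec U P Ψ k t = Ψ(k) = P̃_{k t}^t ⋯ P̃_{k 1}^1 P̃_{k 0}^0 Ψ`. -/
def PsiVec {H : Type*} [NormedAddCommGroup H] [InnerProductSpace ℂ H]
    [FiniteDimensional ℂ H] (U P : ℕ → H →L[ℂ] H) (Ψ : H) (k : ℕ → ℕ) : ℕ → H
  | 0 => Ptilde U P (k 0) 0 Ψ
  | j + 1 => Ptilde U P (k (j + 1)) (j + 1) (PsiVec U P Ψ k j)

/-- Extension of `x ∈ {0,1}^n` (bits `x_1, …, x_n`) to indices `0, …, n` with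
the convention `x_0 := 0`. -/
def extend0 {n : ℕ} (x : Fin n → Bool) : ℕ → Bool :=
  fun m => if h : 1 ≤ m ∧ m ≤ n then x ⟨m - 1, by omega⟩ else false

/-- `sx x k = Σ_{i=0}^t x_{k_i}` (with `x_0 := 0`). -/
def sx {n t : ℕ} (x : Fin n → Bool) (k : Fin (t + 1) → Fin (n + 1)) : ℕ :=
  ∑ i, if extend0 x (k i) then 1 else 0


/-- The character `χ_b(x) = (−1)^{b·x}` on the Boolean cube, where
`b·x = Σ_i b_i x_i`. -/
def chi {n : ℕ} (b x : Fin n → Bool) : ℝ :=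
  (-1 : ℝ) ^ (∑ i, if b i && x i then 1 else 0 : ℕ)

/-- The Fourier coefficient `α_b = 2^{−n} Σ_x f(x) χ_b(x)` of `f : {0,1}^n → ℝ`. -/
def boolFourierCoeff {n : ℕ} (f : (Fin n → Bool) → ℝ) (b : Fin n → Bool) : ℝ :=
  (2 ^ n : ℝ)⁻¹ * ∑ x, f x * chi b x

/-- The Fourier 1-norm `L(f) = Σ_b |α_b|`. -/
def fourierL1 {n : ℕ} (f : (Fin n → Bool) → ℝ) : ℝ :=
  ∑ b, |boolFourierCoeff f b|

open Fin.NatCast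

section Aux

open ContinuousLinearMap Finset

variable {H : Type*} [NormedAddCommGroup H] [InnerProductSpace ℂ H] [FiniteDimensional ℂ H]
variable {n t : ℕ} {P U : ℕ → H →L[ℂ] H}

lemma utilde_unitary (hU : ∀ j ≤ t, adjoint (U j) ∘L U j = 1 ∧ U j ∘L adjoint (U j) = 1)
    {j : ℕ} (hj : j ≤ t) :
    adjoint (Utilde U j) ∘L Utilde U j = 1 ∧ Utilde U j ∘L adjoint (Utilde U j) = 1 := by
  induction j with
  | zero => exact hU 0 (Nat.zero_le t)
  | succ j ih =>
    have ihj := ih (le_trans (Nat.le_succ j) hj)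
    have hUj := hU (j+1) hj
    constructor
    · show adjoint ((U (j+1)) ∘L Utilde U j) ∘L _ = 1
      rw [adjoint_comp]
      calc (adjoint (Utilde U j) ∘L adjoint (U (j+1))) ∘L (U (j+1) ∘L Utilde U j)
          = adjoint (Utilde U j) ∘L ((adjoint (U (j+1)) ∘L U (j+1)) ∘L Utilde U j) := by
            simp [ContinuousLinearMap.comp_assoc]
        _ = 1 := by rw [hUj.1]; ext v; simpa using ContinuousLinearMap.ext_iff.mp ihj.1 v
    · show ((U (j+1)) ∘L Utilde U j) ∘L adjoint ((U (j+1)) ∘L Utilde U j) = 1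
      rw [adjoint_comp]
      calc (U (j+1) ∘L Utilde U j) ∘L (adjoint (Utilde U j) ∘L adjoint (U (j+1)))
          = U (j+1) ∘L ((Utilde U j ∘L adjoint (Utilde U j)) ∘L adjoint (U (j+1))) := by
            simp [ContinuousLinearMap.comp_assoc]
        _ = 1 := by rw [ihj.2]; ext v; simpa using ContinuousLinearMap.ext_iff.mp hUj.2 v

lemma ptilde_selfadj (hP : ∀ i ≤ n, IsSelfAdjoint (P i)) {i : ℕ} (hi : i ≤ n) (j : ℕ) :
    IsSelfAdjoint (Ptilde U P i j) := by
  have : adjoint (Ptilde U P i j) = Ptilde U P i j := by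
    unfold Ptilde
    rw [adjoint_comp, adjoint_comp, adjoint_adjoint, (hP i hi).adjoint_eq,
      ContinuousLinearMap.comp_assoc]
  exact this

lemma ptilde_idem (hU : ∀ j ≤ t, adjoint (U j) ∘L U j = 1 ∧ U j ∘L adjoint (U j) = 1)
    (hP_idem : ∀ i ≤ n, P i ∘L P i = P i) {i : ℕ} (hi : i ≤ n) {j : ℕ} (hj : j ≤ t) :
    Ptilde U P i j ∘L Ptilde U P i j = Ptilde U P i j := by
  have h1 : ∀ w, Utilde U j (adjoint (Utilde U j) w) = w := by
    intro w
    have := ContinuousLinearMap.ext_iff.mp (utilde_unitary hU hj).2 w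
    simpa using this
  have h2 : ∀ w, P i (P i w) = P i w := by
    intro w
    have := ContinuousLinearMap.ext_iff.mp (hP_idem i hi) w
    simpa using this
  ext v
  simp [Ptilde, h1, h2]

lemma sum_ptilde (hU : ∀ j ≤ t, adjoint (U j) ∘L U j = 1 ∧ U j ∘L adjoint (U j) = 1)
    (hP_sum : ∑ i ∈ Finset.range (n + 1), P i = 1) {j : ℕ} (hj : j ≤ t) :
    ∑ i ∈ Finset.range (n + 1), Ptilde U P i j = 1 := by
  have h1 : ∀ w, adjoint (Utilde U j) (Utilde U j w) = w := by
    intro w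
    have := ContinuousLinearMap.ext_iff.mp (utilde_unitary hU hj).1 w
    simpa using this
  have h2 : ∀ w, ∑ i ∈ Finset.range (n + 1), P i w = w := by
    intro w
    have := ContinuousLinearMap.ext_iff.mp hP_sum w
    simpa using this
  ext v
  simp only [ContinuousLinearMap.sum_apply, Ptilde, ContinuousLinearMap.comp_apply,
    ContinuousLinearMap.one_apply, ← map_sum, h2, h1]

lemma sum_norm_sq_ptilde (hU : ∀ j ≤ t, adjoint (U j) ∘L U j = 1 ∧ U j ∘L adjoint (U j) = 1)
    (hP_selfadj : ∀ i ≤ n, IsSelfAdjoint (P i))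
    (hP_idem : ∀ i ≤ n, P i ∘L P i = P i)
    (hP_sum : ∑ i ∈ Finset.range (n + 1), P i = 1) {j : ℕ} (hj : j ≤ t) (v : H) :
    ∑ i ∈ Finset.range (n + 1), ‖Ptilde U P i j v‖ ^ 2 = ‖v‖ ^ 2 := by
  have key : ∀ i ∈ Finset.range (n+1), ‖Ptilde U P i j v‖ ^ 2
      = RCLike.re (inner ℂ v (Ptilde U P i j v) : ℂ) := by
    intro i hi
    rw [Finset.mem_range] at hi
    have hi' : i ≤ n := by omega
    have hsa : adjoint (Ptilde U P i j) = Ptilde U P i j := ptilde_selfadj hP_selfadj hi' j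
    have hid : ∀ w, Ptilde U P i j (Ptilde U P i j w) = Ptilde U P i j w := by
      intro w
      have := ContinuousLinearMap.ext_iff.mp (ptilde_idem hU hP_idem hi' hj) w
      simpa using this
    have hinner : (inner ℂ (Ptilde U P i j v) (Ptilde U P i j v) : ℂ)
        = inner ℂ v (Ptilde U P i j v) := by
      calc (inner ℂ (Ptilde U P i j v) (Ptilde U P i j v) : ℂ)
          = inner ℂ (adjoint (Ptilde U P i j) v) (Ptilde U P i j v) := by rw [hsa]
        _ = inner ℂ v (Ptilde U P i j (Ptilde U P i j v)) :=
            ContinuousLinearMap.adjoint_inner_left _ _ _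
        _ = inner ℂ v (Ptilde U P i j v) := by rw [hid]
    rw [← @inner_self_eq_norm_sq ℂ, hinner]
  rw [Finset.sum_congr rfl key]
  have : ∑ i ∈ Finset.range (n+1), RCLike.re (inner ℂ v (Ptilde U P i j v) : ℂ)
      = RCLike.re (inner ℂ v ((∑ i ∈ Finset.range (n+1), Ptilde U P i j) v) : ℂ) := by
    rw [ContinuousLinearMap.sum_apply, inner_sum, map_sum]
  rw [this, sum_ptilde hU hP_sum hj]
  exact @inner_self_eq_norm_sq ℂ _ _ _ _ v

lemma psiVec_congr (Ψ : H) {k k' : ℕ → ℕ} (j : ℕ) (h : ∀ i ≤ j, k i = k' i) :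
    PsiVec U P Ψ k j = PsiVec U P Ψ k' j := by
  induction j with
  | zero => simp only [PsiVec, h 0 le_rfl]
  | succ j ih =>
    simp only [PsiVec]
    rw [h (j+1) le_rfl, ih (fun i hi => h i (le_trans hi (Nat.le_succ j)))]

lemma natCast_fin_eq_castSucc {j : ℕ} {i : ℕ} (hi : i ≤ j) :
    ((i : Fin (j+2))) = Fin.castSucc ((i : Fin (j+1))) := by
  apply Fin.ext
  simp [Fin.val_natCast, Nat.mod_eq_of_lt (by omega : i < j + 2),
    Nat.mod_eq_of_lt (by omega : i < j + 1)]

lemma sum_sq_psiVec (hU : ∀ j ≤ t, adjoint (U j) ∘L U j = 1 ∧ U j ∘L adjoint (U j) = 1)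
    (hP_selfadj : ∀ i ≤ n, IsSelfAdjoint (P i))
    (hP_idem : ∀ i ≤ n, P i ∘L P i = P i)
    (hP_sum : ∑ i ∈ Finset.range (n + 1), P i = 1) (Ψ : H) :
    ∀ j ≤ t, ∑ k : Fin (j+1) → Fin (n+1),
      ‖PsiVec U P Ψ (fun i => ((k i : ℕ))) j‖ ^ 2 = ‖Ψ‖ ^ 2 := by
  intro j
  induction j with
  | zero =>
    intro hj
    rw [← (Equiv.funUnique (Fin 1) (Fin (n+1))).symm.sum_comp]
    simp only [PsiVec]
    have := sum_norm_sq_ptilde hU hP_selfadj hP_idem hP_sum (Nat.zero_le t) Ψ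
    rw [← Fin.sum_univ_eq_sum_range (fun i => ‖Ptilde U P i 0 Ψ‖ ^ 2) (n+1)] at this
    rw [← this]
    apply Finset.sum_congr rfl
    intro a _
    congr 2
  | succ j ih =>
    intro hj
    have hj' : j ≤ t := by omega
    rw [← (Fin.snocEquiv (fun _ : Fin (j+2) => Fin (n+1))).sum_comp]
    have step : ∀ (p : Fin (n+1) × (Fin (j+1) → Fin (n+1))),
        PsiVec U P Ψ (fun i => (((Fin.snocEquiv (fun _ : Fin (j+2) => Fin (n+1)) p) i : ℕ))) (j+1)
        = Ptilde U P (p.1 : ℕ) (j+1)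
            (PsiVec U P Ψ (fun i => ((p.2 i : ℕ))) j) := by
      rintro ⟨a, g⟩
      simp only [PsiVec, Fin.snocEquiv]
      congr 1
      · have : ((j + 1 : ℕ) : Fin (j+2)) = Fin.last (j+1) := by
          apply Fin.ext
          rw [Fin.val_natCast]
          rw [Nat.mod_eq_of_lt (by omega : j + 1 < j + 2)]
          rfl
        rw [this]
        simp [Fin.snoc_last]
      · apply psiVec_congr
        intro i hi
        rw [natCast_fin_eq_castSucc hi]
        simp [Fin.snoc_castSucc]
    rw [Finset.sum_congr rfl (fun p _ => by rw [step p])]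
    rw [Fintype.sum_prod_type]
    rw [Finset.sum_comm]
    have inner_sum : ∀ g : Fin (j+1) → Fin (n+1),
        ∑ a : Fin (n+1), ‖Ptilde U P (a : ℕ) (j+1) (PsiVec U P Ψ (fun i => ((g i : ℕ))) j)‖ ^ 2
        = ‖PsiVec U P Ψ (fun i => ((g i : ℕ))) j‖ ^ 2 := by
      intro g
      rw [Fin.sum_univ_eq_sum_range (fun i => ‖Ptilde U P i (j+1) _‖ ^ 2) (n+1)]
      exact sum_norm_sq_ptilde hU hP_selfadj hP_idem hP_sum hj _
    rw [Finset.sum_congr rfl (fun g _ => inner_sum g)]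
    exact ih hj'

end Aux

section Fourier

open Finset

lemma neg_one_pow_congr_mod {a b : ℕ} (h : a % 2 = b % 2) : (-1:ℝ)^a = (-1:ℝ)^b := by
  conv_lhs => rw [← Nat.div_add_mod a 2]
  conv_rhs => rw [← Nat.div_add_mod b 2]
  rw [pow_add, pow_add, pow_mul, pow_mul, h]
  norm_num

lemma chi_mul {n : ℕ} (b c x : Fin n → Bool) :
    chi b x * chi c x = chi (fun i => xor (b i) (c i)) x := by
  unfold chi
  rw [← pow_add]
  apply neg_one_pow_congr_mod
  rw [← Finset.sum_add_distrib, Finset.sum_nat_mod,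
    Finset.sum_nat_mod _ 2 (fun i => if (xor (b i) (c i)) && x i then 1 else 0)]
  congr 1
  apply Finset.sum_congr rfl
  intro i _
  cases hb : b i <;> cases hc : c i <;> cases hx : x i <;> simp

lemma sum_chi {n : ℕ} (d : Fin n → Bool) :
    ∑ x : Fin n → Bool, chi d x = if d = (fun _ => false) then (2^n : ℝ) else 0 := by
  by_cases hd : d = fun _ => false
  · subst hd
    rw [if_pos rfl]
    have : ∀ x : Fin n → Bool, chi (fun _ => false) x = 1 := by
      intro x; simp [chi]
    rw [Finset.sum_congr rfl (fun x _ => this x)]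
    simp [Finset.card_univ]
  · rw [if_neg hd]
    obtain ⟨i0, hi0⟩ : ∃ i0, d i0 = true := by
      by_contra hc
      push_neg at hc
      exact hd (funext fun i => by simpa using hc i)
    have hinv : Function.Involutive
        (fun x : Fin n → Bool => Function.update x i0 (!(x i0))) := by
      intro x
      simp [Function.update_idem, Function.update_self]
    have key : ∀ y : Fin n → Bool,
        (∑ i, if d i && y i then 1 else 0 : ℕ)
        = (if y i0 then 1 else 0) + ∑ i ∈ Finset.univ.erase i0,
            (if d i && y i then 1 else 0) := by
      intro y
      rw [← Finset.add_sum_erase _ _ (Finset.mem_univ i0), hi0]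
      simp
    have flip : ∀ x : Fin n → Bool,
        chi d (Function.update x i0 (!(x i0))) = - chi d x := by
      intro x
      unfold chi
      rw [key, key]
      have hupd : ∀ i ∈ Finset.univ.erase i0,
          (if d i && (Function.update x i0 (!(x i0))) i then 1 else 0 : ℕ)
          = if d i && x i then 1 else 0 := by
        intro i hi
        rw [Function.update_of_ne (Finset.ne_of_mem_erase hi)]
      rw [Finset.sum_congr rfl hupd, Function.update_self]
      cases hx : x i0 <;> simp [pow_add, pow_succ]
    have := Equiv.sum_comp (hinv.toPerm _) (chi d)
    have h2 : ∑ x : Fin n → Bool, chi d ((hinv.toPerm _) x)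
        = ∑ x : Fin n → Bool, - chi d x := by
      apply Finset.sum_congr rfl
      intro x _
      exact flip x
    rw [h2] at this
    rw [Finset.sum_neg_distrib] at this
    linarith

lemma boolFourierCoeff_chi {n : ℕ} (c b : Fin n → Bool) :
    boolFourierCoeff (chi c) b = if c = b then 1 else 0 := by
  unfold boolFourierCoeff
  rw [Finset.sum_congr rfl (fun x _ => chi_mul c b x), sum_chi]
  have hiff : ((fun i => xor (c i) (b i)) = fun _ => false) ↔ c = b := by
    constructor
    · intro h
      funext i
      have := congrFun h i
      simpa using this
    · intro h
      subst h
      funext i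
      simp
  by_cases h : c = b
  · rw [if_pos (hiff.mpr h), if_pos h]
    field_simp
  · rw [if_neg (fun hh => h (hiff.mp hh)), if_neg h, mul_zero]

lemma boolFourierCoeff_sum {n : ℕ} {ι : Type*} [Fintype ι]
    (c : ι → ℝ) (bf : ι → (Fin n → Bool)) (b : Fin n → Bool) :
    boolFourierCoeff (fun x => ∑ p, chi (bf p) x * c p) b
      = ∑ p, (if bf p = b then 1 else 0) * c p := by
  unfold boolFourierCoeff
  have h1 : ∀ x : Fin n → Bool, (∑ p, chi (bf p) x * c p) * chi b x
      = ∑ p, (chi (bf p) x * chi b x) * c p := by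
    intro x
    rw [Finset.sum_mul]
    apply Finset.sum_congr rfl
    intro p _
    ring
  rw [Finset.sum_congr rfl (fun x _ => h1 x), Finset.sum_comm, Finset.mul_sum]
  apply Finset.sum_congr rfl
  intro p _
  rw [← boolFourierCoeff_chi (bf p) b]
  unfold boolFourierCoeff
  rw [mul_assoc, Finset.sum_mul]

end Fourier

section Comb
open Finset

lemma extend0_term {n : ℕ} (x : Fin n → Bool) (m : Fin (n+1)) :
    (if extend0 x (m : ℕ) then 1 else 0 : ℕ)
      = ∑ i : Fin n, if ((m : ℕ) = (i : ℕ) + 1 ∧ x i = true) then 1 else 0 := by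
  induction m using Fin.cases with
  | zero =>
    simp [extend0]
  | succ i0 =>
    have key : ∀ i : Fin n,
        (if (((Fin.succ i0 : Fin (n+1)) : ℕ) = (i : ℕ) + 1 ∧ x i = true) then 1 else 0 : ℕ)
        = if i = i0 then (if x i = true then 1 else 0) else 0 := by
      intro i
      by_cases h : i = i0
      · subst h
        simp
      · have hne : ¬ (((Fin.succ i0 : Fin (n+1)) : ℕ) = (i : ℕ) + 1) := by
          simp only [Fin.val_succ]
          intro hc
          exact h (Fin.ext (by omega))
        rw [if_neg (fun hh => hne hh.1), if_neg h]
    rw [Finset.sum_congr rfl (fun i _ => key i),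
      Finset.sum_ite_eq' Finset.univ i0 (fun i => if x i = true then 1 else 0)]
    simp only [Finset.mem_univ, if_true]
    have hl : extend0 x ((Fin.succ i0 : Fin (n+1)) : ℕ) = x i0 := by
      show extend0 x ((i0:ℕ)+1) = x i0
      unfold extend0
      rw [dif_pos ⟨Nat.le_add_left 1 _, i0.2⟩]
      congr 1
    rw [hl]

lemma sx_eq {n t : ℕ} (x : Fin n → Bool) (k : Fin (t+1) → Fin (n+1)) :
    sx x k = ∑ i : Fin n,
      (if x i then (∑ j, if (k j : ℕ) = (i:ℕ)+1 then 1 else 0) else 0) := by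
  unfold sx
  rw [Finset.sum_congr rfl (fun j _ => extend0_term x (k j)), Finset.sum_comm]
  apply Finset.sum_congr rfl
  intro i _
  by_cases hx : x i
  · rw [if_pos hx]
    apply Finset.sum_congr rfl
    intro j _
    simp [hx]
  · rw [if_neg hx]
    apply Finset.sum_eq_zero
    intro j _
    simp [hx]

lemma sx_parity {n t : ℕ} (x : Fin n → Bool) (k l : Fin (t+1) → Fin (n+1)) :
    (-1:ℝ) ^ (sx x k + sx x l)
      = chi (fun i => decide ((((∑ j, if (k j : ℕ) = (i:ℕ)+1 then 1 else 0) : ℕ)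
          + ∑ j, if (l j : ℕ) = (i:ℕ)+1 then 1 else 0) % 2 = 1)) x := by
  unfold chi
  apply neg_one_pow_congr_mod
  rw [sx_eq, sx_eq, ← Finset.sum_add_distrib]
  rw [Finset.sum_nat_mod, Finset.sum_nat_mod (Finset.univ : Finset (Fin n)) 2
    (fun i : Fin n => if (decide ((((∑ j, if (k j : ℕ) = (i:ℕ)+1 then 1 else 0) : ℕ)
          + ∑ j, if (l j : ℕ) = (i:ℕ)+1 then 1 else 0) % 2 = 1)) && x i then 1 else 0)]
  congr 1
  apply Finset.sum_congr rfl
  intro i _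
  by_cases hx : x i
  · simp only [hx, Bool.and_true, decide_eq_true_eq]
    split_ifs with hc <;> omega
  · simp [hx]

end Comb

section Main
open Finset ContinuousLinearMap

variable {H : Type*} [NormedAddCommGroup H] [InnerProductSpace ℂ H] [FiniteDimensional ℂ H]

lemma norm_proj_le (Q : H →L[ℂ] H) (hsa : IsSelfAdjoint Q) (hid : Q ∘L Q = Q) (v : H) :
    ‖Q v‖ ≤ ‖v‖ := by
  have hadj : adjoint Q = Q := by
    rw [← ContinuousLinearMap.star_eq_adjoint]
    exact hsa
  have hq : ∀ w, Q (Q w) = Q w := fun w => by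
    have := ContinuousLinearMap.ext_iff.mp hid w
    simpa using this
  have h2 : ‖Q v‖^2 = RCLike.re (inner ℂ v (Q v) : ℂ) := by
    rw [← @inner_self_eq_norm_sq ℂ]
    have : (inner ℂ (Q v) (Q v) : ℂ) = inner ℂ v (Q v) := by
      calc (inner ℂ (Q v) (Q v) : ℂ) = inner ℂ (adjoint Q v) (Q v) := by rw [hadj]
        _ = inner ℂ v (Q (Q v)) := ContinuousLinearMap.adjoint_inner_left _ _ _
        _ = inner ℂ v (Q v) := by rw [hq]
    rw [this]
  have h3 : RCLike.re (inner ℂ v (Q v) : ℂ) ≤ ‖v‖ * ‖Q v‖ := by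
    calc RCLike.re (inner ℂ v (Q v) : ℂ) ≤ ‖(inner ℂ v (Q v) : ℂ)‖ := RCLike.re_le_norm _
      _ ≤ ‖v‖ * ‖Q v‖ := norm_inner_le_norm _ _
  by_cases h0 : ‖Q v‖ = 0
  · rw [h0]
    exact norm_nonneg v
  · have hpos : 0 < ‖Q v‖ := lt_of_le_of_ne (norm_nonneg _) (Ne.symm h0)
    nlinarith [h2, h3]

lemma pi_expand {n t : ℕ} (V : (Fin (t+1) → Fin (n+1)) → H) (Q : H →L[ℂ] H)
    (x : Fin n → Bool) :
    ‖Q (∑ k : Fin (t+1) → Fin (n+1), ((-1 : ℂ) ^ sx x k) • V k)‖ ^ 2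
      = ∑ p : (Fin (t+1) → Fin (n+1)) × (Fin (t+1) → Fin (n+1)),
          ((-1:ℝ) ^ (sx x p.1 + sx x p.2))
            * RCLike.re (inner ℂ (Q (V p.1)) (Q (V p.2)) : ℂ) := by
  rw [map_sum, ← @inner_self_eq_norm_sq ℂ]
  have h0 : ∀ k, Q (((-1 : ℂ) ^ sx x k) • V k) = ((-1 : ℂ) ^ sx x k) • Q (V k) :=
    fun k => by simp
  rw [Finset.sum_congr rfl (fun k _ => h0 k)]
  have h1 : (inner ℂ (∑ k : Fin (t+1) → Fin (n+1), ((-1:ℂ) ^ sx x k) • Q (V k))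
        (∑ l : Fin (t+1) → Fin (n+1), ((-1:ℂ) ^ sx x l) • Q (V l)) : ℂ)
      = ∑ k : Fin (t+1) → Fin (n+1), ∑ l : Fin (t+1) → Fin (n+1),
          ((-1:ℂ) ^ (sx x k + sx x l)) * inner ℂ (Q (V k)) (Q (V l)) := by
    rw [sum_inner]
    apply Finset.sum_congr rfl
    intro k _
    rw [inner_sum]
    apply Finset.sum_congr rfl
    intro l _
    rw [inner_smul_left, inner_smul_right, pow_add]
    have hconj : (starRingEnd ℂ) ((-1:ℂ) ^ sx x k) = (-1:ℂ) ^ sx x k := by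
      rw [map_pow]
      simp
    rw [hconj]
    ring
  rw [h1, map_sum, Fintype.sum_prod_type]
  apply Finset.sum_congr rfl
  intro k _
  rw [map_sum]
  apply Finset.sum_congr rfl
  intro l _
  have : ((-1:ℂ) ^ (sx x k + sx x l)) = ((((-1:ℝ) ^ (sx x k + sx x l) : ℝ)) : ℂ) := by
    push_cast
    ring
  rw [this, ← Complex.real_smul, RCLike.smul_re]

end Main

section Main2
open Finset ContinuousLinearMap

variable {H : Type*} [NormedAddCommGroup H] [InnerProductSpace ℂ H] [FiniteDimensional ℂ H]

lemma main_bound {n t : ℕ} (V : (Fin (t+1) → Fin (n+1)) → H) (Q : H →L[ℂ] H)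
    (hQ_selfadj : IsSelfAdjoint Q) (hQ_idem : Q ∘L Q = Q) :
    fourierL1 (fun x : Fin n → Bool =>
      ‖Q (∑ k : Fin (t+1) → Fin (n+1), ((-1:ℂ) ^ sx x k) • V k)‖ ^ 2)
      ≤ (∑ k : Fin (t+1) → Fin (n+1), ‖V k‖) ^ 2 := by
  set c : ((Fin (t+1) → Fin (n+1)) × (Fin (t+1) → Fin (n+1))) → ℝ :=
    fun p => RCLike.re (inner ℂ (Q (V p.1)) (Q (V p.2)) : ℂ) with hc
  set bf : ((Fin (t+1) → Fin (n+1)) × (Fin (t+1) → Fin (n+1))) → (Fin n → Bool) :=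
    fun p i => decide ((((∑ j, if (p.1 j : ℕ) = (i:ℕ)+1 then 1 else 0) : ℕ)
      + ∑ j, if (p.2 j : ℕ) = (i:ℕ)+1 then 1 else 0) % 2 = 1) with hbf
  have hpi : (fun x : Fin n → Bool =>
      ‖Q (∑ k : Fin (t+1) → Fin (n+1), ((-1:ℂ) ^ sx x k) • V k)‖ ^ 2)
      = fun x => ∑ p : (Fin (t+1) → Fin (n+1)) × (Fin (t+1) → Fin (n+1)),
          chi (bf p) x * c p := by
    funext x
    rw [pi_expand]
    apply Finset.sum_congr rfl
    intro p _
    rw [sx_parity]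
  have hL : fourierL1 (fun x : Fin n → Bool =>
      ‖Q (∑ k : Fin (t+1) → Fin (n+1), ((-1:ℂ) ^ sx x k) • V k)‖ ^ 2)
      ≤ ∑ p : (Fin (t+1) → Fin (n+1)) × (Fin (t+1) → Fin (n+1)), |c p| := by
    unfold fourierL1
    rw [hpi]
    calc ∑ b, |boolFourierCoeff (fun x => ∑ p : (Fin (t+1) → Fin (n+1)) ×
            (Fin (t+1) → Fin (n+1)), chi (bf p) x * c p) b|
        = ∑ b, |∑ p : (Fin (t+1) → Fin (n+1)) × (Fin (t+1) → Fin (n+1)),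
            (if bf p = b then 1 else 0) * c p| := by
          apply Finset.sum_congr rfl
          intro b _
          rw [boolFourierCoeff_sum c bf b]
      _ ≤ ∑ b, ∑ p : (Fin (t+1) → Fin (n+1)) × (Fin (t+1) → Fin (n+1)),
            |(if bf p = b then 1 else 0) * c p| :=
          Finset.sum_le_sum (fun b _ => Finset.abs_sum_le_sum_abs _ _)
      _ = ∑ b, ∑ p ∈ Finset.univ.filter
            (fun p : (Fin (t+1) → Fin (n+1)) × (Fin (t+1) → Fin (n+1)) => bf p = b),
            |c p| := by
          apply Finset.sum_congr rfl
          intro b _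
          rw [Finset.sum_filter]
          apply Finset.sum_congr rfl
          intro p _
          by_cases h : bf p = b <;> simp [h]
      _ = ∑ p : (Fin (t+1) → Fin (n+1)) × (Fin (t+1) → Fin (n+1)), |c p| :=
          Finset.sum_fiberwise _ _ _
  have hcb : ∀ p : (Fin (t+1) → Fin (n+1)) × (Fin (t+1) → Fin (n+1)),
      |c p| ≤ ‖V p.1‖ * ‖V p.2‖ := by
    intro p
    calc |c p| ≤ ‖(inner ℂ (Q (V p.1)) (Q (V p.2)) : ℂ)‖ := RCLike.abs_re_le_norm _
      _ ≤ ‖Q (V p.1)‖ * ‖Q (V p.2)‖ := norm_inner_le_norm _ _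
      _ ≤ ‖V p.1‖ * ‖V p.2‖ :=
          mul_le_mul (norm_proj_le Q hQ_selfadj hQ_idem _)
            (norm_proj_le Q hQ_selfadj hQ_idem _) (norm_nonneg _) (norm_nonneg _)
  calc fourierL1 _ ≤ ∑ p : (Fin (t+1) → Fin (n+1)) × (Fin (t+1) → Fin (n+1)), |c p| := hL
    _ ≤ ∑ p : (Fin (t+1) → Fin (n+1)) × (Fin (t+1) → Fin (n+1)), ‖V p.1‖ * ‖V p.2‖ :=
        Finset.sum_le_sum (fun p _ => hcb p)
    _ = (∑ k : Fin (t+1) → Fin (n+1), ‖V k‖) ^ 2 := by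
        rw [Fintype.sum_prod_type, sq, Fintype.sum_mul_sum]

end Main2

/-- For a CSOP `P̄_0, …, P̄_n`, unitaries `U_0, …, U_t`, a unit vector
`Ψ ∈ H` and an orthogonal projection `Q`, if some `Ψ(k)` is nonzero and
`μ = min{‖Ψ(k)‖² : Ψ(k) ≠ 0}`, then the output probability
`π(x) = ‖Q Σ_k (−1)^{s_x(k)} Ψ(k)‖²` satisfies `L(π) ≤ 1/μ`. -/
theorem fourierL1_le_inv_min_sq_norm {H : Type*} [NormedAddCommGroup H]
    [InnerProductSpace ℂ H] [FiniteDimensional ℂ H] (n t : ℕ) (P U : ℕ → H →L[ℂ] H)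
    (hP_selfadj : ∀ i ≤ n, IsSelfAdjoint (P i))
    (hP_idem : ∀ i ≤ n, P i ∘L P i = P i)
    (hP_orth : ∀ i ≤ n, ∀ j ≤ n, i ≠ j → P i ∘L P j = 0)
    (hP_sum : ∑ i ∈ Finset.range (n + 1), P i = 1)
    (hU_unitary : ∀ j ≤ t,
      ContinuousLinearMap.adjoint (U j) ∘L U j = 1 ∧
        U j ∘L ContinuousLinearMap.adjoint (U j) = 1)
    (Ψ : H) (hΨ : ‖Ψ‖ = 1)
    (Q : H →L[ℂ] H) (hQ_selfadj : IsSelfAdjoint Q) (hQ_idem : Q ∘L Q = Q)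
    (hex : ∃ k : Fin (t + 1) → Fin (n + 1), PsiVec U P Ψ (fun i => (k i : ℕ)) t ≠ 0)
    (μ : ℝ)
    (hμ : IsLeast {r : ℝ | ∃ k : Fin (t + 1) → Fin (n + 1),
        PsiVec U P Ψ (fun i => (k i : ℕ)) t ≠ 0 ∧
        r = ‖PsiVec U P Ψ (fun i => (k i : ℕ)) t‖ ^ 2} μ) :
    fourierL1 (fun x : Fin n → Bool =>
        ‖Q (∑ k : Fin (t + 1) → Fin (n + 1),
            ((-1 : ℂ) ^ sx x k) • PsiVec U P Ψ (fun i => (k i : ℕ)) t)‖ ^ 2) ≤ 1 / μ := by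
  obtain ⟨⟨k0, hk0ne, hk0eq⟩, hlb⟩ := hμ
  have hμpos : 0 < μ := by
    rw [hk0eq]
    exact pow_pos (norm_pos_iff.mpr hk0ne) 2
  have hsum_sq : ∑ k : Fin (t+1) → Fin (n+1),
      ‖PsiVec U P Ψ (fun i => (k i : ℕ)) t‖ ^ 2 = 1 := by
    have := sum_sq_psiVec hU_unitary hP_selfadj hP_idem hP_sum Ψ t le_rfl
    rw [hΨ] at this
    simpa using this
  set s := Real.sqrt μ with hs
  have hspos : 0 < s := Real.sqrt_pos.mpr hμpos
  have hnorm_le : ∀ k : Fin (t+1) → Fin (n+1),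
      ‖PsiVec U P Ψ (fun i => (k i : ℕ)) t‖
      ≤ ‖PsiVec U P Ψ (fun i => (k i : ℕ)) t‖ ^ 2 / s := by
    intro k
    by_cases h : PsiVec U P Ψ (fun i => (k i : ℕ)) t = 0
    · rw [h]
      simp
    · have hμle : μ ≤ ‖PsiVec U P Ψ (fun i => (k i : ℕ)) t‖ ^ 2 := hlb ⟨k, h, rfl⟩
      have hsle : s ≤ ‖PsiVec U P Ψ (fun i => (k i : ℕ)) t‖ := by
        rw [hs]
        calc Real.sqrt μ ≤ Real.sqrt (‖PsiVec U P Ψ (fun i => (k i : ℕ)) t‖ ^ 2) :=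
              Real.sqrt_le_sqrt hμle
          _ = ‖PsiVec U P Ψ (fun i => (k i : ℕ)) t‖ := Real.sqrt_sq (norm_nonneg _)
      rw [le_div_iff₀ hspos]
      nlinarith [norm_nonneg (PsiVec U P Ψ (fun i => (k i : ℕ)) t)]
  have hsum_norm : ∑ k : Fin (t+1) → Fin (n+1),
      ‖PsiVec U P Ψ (fun i => (k i : ℕ)) t‖ ≤ 1 / s := by
    calc ∑ k : Fin (t+1) → Fin (n+1), ‖PsiVec U P Ψ (fun i => (k i : ℕ)) t‖
        ≤ ∑ k : Fin (t+1) → Fin (n+1), ‖PsiVec U P Ψ (fun i => (k i : ℕ)) t‖ ^ 2 / s :=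
          Finset.sum_le_sum (fun k _ => hnorm_le k)
      _ = (∑ k : Fin (t+1) → Fin (n+1), ‖PsiVec U P Ψ (fun i => (k i : ℕ)) t‖ ^ 2) / s := by
          rw [← Finset.sum_div]
      _ = 1 / s := by rw [hsum_sq]
  calc fourierL1 (fun x : Fin n → Bool =>
        ‖Q (∑ k : Fin (t + 1) → Fin (n + 1),
            ((-1 : ℂ) ^ sx x k) • PsiVec U P Ψ (fun i => (k i : ℕ)) t)‖ ^ 2)
      ≤ (∑ k : Fin (t+1) → Fin (n+1), ‖PsiVec U P Ψ (fun i => (k i : ℕ)) t‖) ^ 2 :=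
        main_bound (fun k => PsiVec U P Ψ (fun i => (k i : ℕ)) t) Q hQ_selfadj hQ_idem
    _ ≤ (1 / s) ^ 2 := by
        apply pow_le_pow_left₀ (Finset.sum_nonneg (fun k _ => norm_nonneg _)) hsum_norm
    _ = 1 / μ := by
        rw [div_pow, one_pow, hs, Real.sq_sqrt hμpos.le]
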